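/- With Q^{-1}(x,y) = 2·1_{x=y-1} - 1_{x=y} and Q_ext^{(n)}(y1,y2) = (y1-y2-1)_{n-1} / (2^{y1-y2}(n-1)!), one has Q^{-1} Q_ext^{(n)} = Q_ext^{(n)} Q^{-1} = Q_ext^{(n-1)} for all n >= 2, while Q^{-1} Q_ext^{(1)} = Q_ext^{(1)} Q^{-1} = 0. -/

import Mathlib

open scoped BigOperators

/-- The kernel `Q^{-1}(x,y) = 2·1_{x=y-1} - 1_{x=y}`. -/
noncomputable def Qinv : ℤ → ℤ → ℝ :=
  fun x y => 2 * (if x = y - 1 then 1 else 0) - (if x = y then 1 else 0)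

/-- Composition of kernels on `ℤ`. -/
noncomputable def kcomp (A B : ℤ → ℤ → ℝ) : ℤ → ℤ → ℝ := fun x y => ∑' z : ℤ, A x z * B z y

/-- The extended kernel
`Q_ext^{(n)}(y₁,y₂) = (y₁-y₂-1)_{n-1} / (2^{y₁-y₂} (n-1)!)`. -/
noncomputable def Qext (n : ℕ) : ℤ → ℤ → ℝ := fun y1 y2 =>
  (∏ i ∈ Finset.range (n - 1), ((y1 - y2 - 1 - (i : ℤ) : ℤ) : ℝ)) /
    ((2 : ℝ) ^ (y1 - y2) * ((n - 1).factorial : ℝ))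

/-- `Q^{-1} Q_ext^{(n)} = Q_ext^{(n)} Q^{-1} = Q_ext^{(n-1)}` for `n ≥ 2`,
while `Q^{-1} Q_ext^{(1)} = Q_ext^{(1)} Q^{-1} = 0`. -/
lemma qinv_left (f : ℤ → ℝ) (x : ℤ) :
    (∑' z : ℤ, Qinv x z * f z) = 2 * f (x + 1) - f x := by
  have hs : (∑' z : ℤ, Qinv x z * f z) = ∑ z ∈ ({x + 1, x} : Finset ℤ), Qinv x z * f z := by
    refine tsum_eq_sum ?_
    intro b hb
    simp only [Finset.mem_insert, Finset.mem_singleton, not_or] at hb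
    have h1 : x ≠ b - 1 := by omega
    have h2 : x ≠ b := by omega
    simp [Qinv, h1, h2]
  rw [hs, Finset.sum_pair (by omega : x + 1 ≠ x)]
  have e1 : Qinv x (x + 1) = 2 := by simp [Qinv]
  have e2 : Qinv x x = -1 := by
    simp [Qinv, show ¬ (x = x - 1) from by omega]
  rw [e1, e2]; ring

lemma qinv_right (f : ℤ → ℝ) (y : ℤ) :
    (∑' z : ℤ, f z * Qinv z y) = 2 * f (y - 1) - f y := by
  have hs : (∑' z : ℤ, f z * Qinv z y) = ∑ z ∈ ({y - 1, y} : Finset ℤ), f z * Qinv z y := by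
    refine tsum_eq_sum ?_
    intro b hb
    simp only [Finset.mem_insert, Finset.mem_singleton, not_or] at hb
    have h1 : b ≠ y - 1 := hb.1
    have h2 : b ≠ y := hb.2
    simp [Qinv, h1, h2]
  rw [hs, Finset.sum_pair (by omega : y - 1 ≠ y)]
  have e1 : Qinv (y - 1) y = 2 := by simp [Qinv]
  have e2 : Qinv y y = -1 := by
    simp [Qinv, show ¬ (y = y - 1) from by omega]
  rw [e1, e2]; ring

lemma Qext_diff {n : ℕ} {a b c d : ℤ} (h : a - b = c - d) : Qext n a b = Qext n c d := by
  unfold Qext; rw [h]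

lemma key1 (x y : ℤ) : 2 * Qext 1 (x + 1) y - Qext 1 x y = 0 := by
  simp only [Qext]
  have h2 : (2 : ℝ) ≠ 0 := by norm_num
  have : x + 1 - y = (x - y) + 1 := by ring
  rw [this, zpow_add_one₀ h2]
  simp

lemma key (m : ℕ) (x y : ℤ) :
    2 * Qext (m + 2) (x + 1) y - Qext (m + 2) x y = Qext (m + 1) x y := by
  simp only [Qext]
  have h2 : (2 : ℝ) ≠ 0 := by norm_num
  have hd : x + 1 - y = (x - y) + 1 := by ring
  rw [hd, zpow_add_one₀ h2]
  have hpow : (2 : ℝ) ^ (x - y) ≠ 0 := zpow_ne_zero _ h2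
  have hprod : (∏ i ∈ Finset.range (m + 2 - 1), ((x - y + 1 - 1 - (i : ℤ) : ℤ) : ℝ))
      - (∏ i ∈ Finset.range (m + 2 - 1), ((x - y - 1 - (i : ℤ) : ℤ) : ℝ))
      = (m + 1) * ∏ i ∈ Finset.range (m + 1 - 1), ((x - y - 1 - (i : ℤ) : ℤ) : ℝ) := by
    have e1 : (m + 2 - 1) = (m + 1 - 1) + 1 := by omega
    rw [e1, Finset.prod_range_succ', Finset.prod_range_succ]
    have hcong : ∀ i ∈ Finset.range (m + 1 - 1),
        ((x - y + 1 - 1 - ((i + 1 : ℕ) : ℤ) : ℤ) : ℝ) = ((x - y - 1 - (i : ℤ) : ℤ) : ℝ) := by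
      intro i _; push_cast; ring
    rw [Finset.prod_congr rfl hcong]
    push_cast
    ring
  have hfac : ((m + 2 - 1).factorial : ℝ) = (m + 1) * ((m + 1 - 1).factorial : ℝ) := by
    have h : (m + 2 - 1) = (m + 1 - 1) + 1 := rfl
    rw [h, Nat.factorial_succ]
    push_cast
    norm_num
  have hfne : ((m + 1 - 1).factorial : ℝ) ≠ 0 := Nat.cast_ne_zero.2 (Nat.factorial_ne_zero _)
  have hm1 : ((m : ℝ) + 1) ≠ 0 := by positivity
  rw [hfac]
  set P1 : ℝ := ∏ i ∈ Finset.range (m + 2 - 1), ((x - y + 1 - 1 - (i : ℤ) : ℤ) : ℝ) with hP1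
  set P2 : ℝ := ∏ i ∈ Finset.range (m + 2 - 1), ((x - y - 1 - (i : ℤ) : ℤ) : ℝ) with hP2
  set P3 : ℝ := ∏ i ∈ Finset.range (m + 1 - 1), ((x - y - 1 - (i : ℤ) : ℤ) : ℝ) with hP3
  set a : ℝ := (2 : ℝ) ^ (x - y) with ha
  set f : ℝ := ((m + 1 - 1).factorial : ℝ) with hf
  field_simp
  linear_combination hprod

theorem Qinv_Qext :
    (∀ n : ℕ, 2 ≤ n → ∀ x y : ℤ,
      kcomp Qinv (Qext n) x y = Qext (n - 1) x y ∧
      kcomp (Qext n) Qinv x y = Qext (n - 1) x y) ∧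
    (∀ x y : ℤ, kcomp Qinv (Qext 1) x y = 0 ∧ kcomp (Qext 1) Qinv x y = 0) := by
  constructor
  · intro n hn x y
    obtain ⟨m, rfl⟩ : ∃ m, n = m + 2 := ⟨n - 2, by omega⟩
    have e : m + 2 - 1 = m + 1 := rfl
    constructor
    · simp only [kcomp]
      rw [qinv_left (fun z => Qext (m + 2) z y) x, e]
      exact key m x y
    · simp only [kcomp]
      rw [qinv_right (fun z => Qext (m + 2) x z) y, e]
      rw [Qext_diff (show x - (y - 1) = (x + 1) - y by ring)]
      exact key m x y
  · intro x y
    constructor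
    · simp only [kcomp]
      rw [qinv_left (fun z => Qext 1 z y) x]
      exact key1 x y
    · simp only [kcomp]
      rw [qinv_right (fun z => Qext 1 x z) y]
      rw [Qext_diff (show x - (y - 1) = (x + 1) - y by ring)]
      exact key1 x y
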